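/- Let (μ_k) be a sequence of concave C¹ functions converging locally uniformly to a concave function ν with ν(0) < 0 and μ_k(0) < 0, with uniformly bounded (μ_k'(0)) and (μ_k(0)). Define c*_k = min{ c : ∃ λ > 0, μ_k(λ) = λ² − cλ } and c* = min{ c : ∃ λ > 0, ν(λ) = λ² − cλ }. Then c*_k → c* as k → ∞. -/

import Mathlib

open Filter

namespace MinSpeedAux

/-- The "speed" function `g f l = l - f l / l`. -/
noncomputable def g (f : ℝ → ℝ) (l : ℝ) : ℝ := l - f l / l

lemma mem_speed_iff {f : ℝ → ℝ} {c : ℝ} :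
    c ∈ {c : ℝ | ∃ l > 0, f l = l ^ 2 - c * l} ↔ ∃ l > 0, c = g f l := by
  constructor
  · rintro ⟨l, hl, h⟩
    refine ⟨l, hl, ?_⟩
    have hl' : l ≠ 0 := ne_of_gt hl
    simp only [g]; rw [eq_sub_iff_add_eq, ← eq_sub_iff_add_eq', div_eq_iff hl']
    nlinarith [h]
  · rintro ⟨l, hl, h⟩
    refine ⟨l, hl, ?_⟩
    have hl' : l ≠ 0 := ne_of_gt hl
    rw [h]
    simp only [g]; rw [sub_mul, div_mul_cancel₀ _ hl']
    ring

/-- Concave function lies below the secant extension through `(-1, f (-1))` and `(0, f 0)`. -/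
lemma concave_upper {f : ℝ → ℝ} (hf : ConcaveOn ℝ Set.univ f) {l : ℝ} (hl : 0 < l) :
    f l ≤ f 0 + l * (f 0 - f (-1)) := by
  have h1l : (0:ℝ) < 1 + l := by linarith
  have hsum : l / (1 + l) + 1 / (1 + l) = 1 := by
    field_simp
    ring
  have h := hf.2 (Set.mem_univ (-1 : ℝ)) (Set.mem_univ l)
    (show (0:ℝ) ≤ l / (1 + l) by positivity)
    (show (0:ℝ) ≤ 1 / (1 + l) by positivity) hsum
  have hx : (l / (1 + l)) • (-1 : ℝ) + (1 / (1 + l)) • l = 0 := by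
    simp only [smul_eq_mul]
    field_simp
    ring
  rw [hx] at h
  simp only [smul_eq_mul] at h
  have key : l * f (-1) + f l ≤ f 0 * (1 + l) := by
    have h' := mul_le_mul_of_nonneg_right h (le_of_lt h1l)
    calc l * f (-1) + f l
        = (l / (1 + l) * f (-1) + 1 / (1 + l) * f l) * (1 + l) := by
          field_simp
      _ ≤ f 0 * (1 + l) := h'
  nlinarith [key]

lemma g_lower {f : ℝ → ℝ} (hf : ConcaveOn ℝ Set.univ f) (hf0 : f 0 < 0) {l : ℝ}
    (hl : 0 < l) : l - (f 0 - f (-1)) ≤ g f l := by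
  have h := concave_upper hf hl
  have h1 : f l / l ≤ (f 0 + l * (f 0 - f (-1))) / l := by gcongr
  have h2 : (f 0 + l * (f 0 - f (-1))) / l = f 0 / l + (f 0 - f (-1)) := by
    field_simp
  rw [h2] at h1
  have h3 : f 0 / l ≤ 0 := le_of_lt (div_neg_of_neg_of_pos hf0 hl)
  simp only [g]
  linarith

lemma speed_bddBelow {f : ℝ → ℝ} (hf : ConcaveOn ℝ Set.univ f) (hf0 : f 0 < 0) :
    BddBelow {c : ℝ | ∃ l > 0, f l = l ^ 2 - c * l} := by
  refine ⟨-(f 0 - f (-1)), fun c hc => ?_⟩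
  obtain ⟨l, hl, hc'⟩ := mem_speed_iff.mp hc
  have := g_lower hf hf0 hl
  rw [hc']
  linarith

lemma speed_nonempty (f : ℝ → ℝ) :
    Set.Nonempty {c : ℝ | ∃ l > 0, f l = l ^ 2 - c * l} :=
  ⟨g f 1, mem_speed_iff.mpr ⟨1, one_pos, rfl⟩⟩

end MinSpeedAux

open MinSpeedAux

set_option maxHeartbeats 800000 in
/-- Convergence of minimal speeds (final assertion of Theorem 2, abstract form):
if concave `C¹` functions `μ k` converge locally uniformly to a concave `ν` with
`ν 0 < 0` and `μ k 0 < 0`, with `(μ k 0)` and `(μ k)'(0)` bounded, then the minimal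
speeds `c*_k = min {c : ∃ λ > 0, μ k λ = λ² - cλ}` converge to
`c* = min {c : ∃ λ > 0, ν λ = λ² - cλ}`. -/
theorem minimal_speeds_converge (μ : ℕ → ℝ → ℝ) (ν : ℝ → ℝ)
    (hconc : ∀ k, ConcaveOn ℝ Set.univ (μ k))
    (hC1 : ∀ k, ContDiff ℝ 1 (μ k))
    (hν : ConcaveOn ℝ Set.univ ν)
    (hcv : TendstoLocallyUniformly μ ν atTop)
    (hν0 : ν 0 < 0) (hμ0 : ∀ k, μ k 0 < 0)
    (hb0 : ∃ M, ∀ k, |μ k 0| ≤ M)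
    (hb1 : ∃ M, ∀ k, |deriv (μ k) 0| ≤ M) :
    Tendsto (fun k => sInf {c : ℝ | ∃ l > 0, μ k l = l ^ 2 - c * l}) atTop
      (nhds (sInf {c : ℝ | ∃ l > 0, ν l = l ^ 2 - c * l})) := by
  classical
  set S : Set ℝ := {c : ℝ | ∃ l > 0, ν l = l ^ 2 - c * l} with hSdef
  have hSne : S.Nonempty := speed_nonempty ν
  have hSbdd : BddBelow S := speed_bddBelow hν hν0
  set cs : ℝ := sInf S with hcsdef
  have hcs_le : ∀ l : ℝ, 0 < l → cs ≤ g ν l := fun l hl =>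
    csInf_le hSbdd (mem_speed_iff.mpr ⟨l, hl, rfl⟩)
  -- continuity of ν
  have hcont : Continuous ν :=
    hcv.continuous (Frequently.of_forall fun k => (hC1 k).continuous)
  -- locally uniform convergence on sets / pointwise
  have hluo : TendstoLocallyUniformlyOn μ ν atTop Set.univ :=
    (tendstoLocallyUniformlyOn_univ).mpr hcv
  have hpt : ∀ x : ℝ, Tendsto (fun k => μ k x) atTop (nhds (ν x)) := fun x =>
    hluo.tendsto_at (Set.mem_univ x)
  have hUnif : ∀ s : Set ℝ, IsCompact s → TendstoUniformlyOn μ ν atTop s := fun s hs =>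
    (tendstoLocallyUniformlyOn_iff_tendstoUniformlyOn_of_compact hs).mp
      (hluo.mono (Set.subset_univ s))
  rw [Metric.tendsto_nhds]
  intro ε hε
  -- constants
  set η : ℝ := -ν 0 with hηdef
  have hηpos : 0 < η := by simp only [hηdef]; linarith
  -- δ from continuity at 0
  have hev : ∀ᶠ x in nhds (0 : ℝ), ν x < -η / 2 := by
    have : ν 0 < -η / 2 := by simp only [hηdef]; linarith
    exact (hcont.tendsto 0).eventually_lt_const this
  obtain ⟨δ, hδpos, hδ⟩ := Metric.eventually_nhds_iff.mp hev
  set T : ℝ := |cs| + 1 with hTdef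
  have hTpos : 0 < T := by positivity
  have hcsT : cs ≤ T := by
    have := le_abs_self cs; simp only [hTdef]; linarith
  set a : ℝ := min (δ / 2) ((η / 4) / T) with hadef
  have hapos : 0 < a := lt_min (by linarith) (by positivity)
  have haδ : a ≤ δ / 2 := min_le_left _ _
  have haT : a * T ≤ η / 4 := by
    have h1 : a ≤ (η / 4) / T := min_le_right _ _
    rwa [le_div_iff₀ hTpos] at h1
  set Cν : ℝ := ν 0 - ν (-1) with hCdef
  set b : ℝ := |cs| + |Cν| + 2 with hbdef
  -- choose near-minimizer for ν
  have hlt : cs < cs + ε / 4 := by linarith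
  obtain ⟨c₀, hc₀S, hc₀lt⟩ := (csInf_lt_iff hSbdd hSne).mp hlt
  obtain ⟨l₀, hl₀, hc₀⟩ := mem_speed_iff.mp hc₀S
  -- eventual statements
  have E0 : ∀ᶠ k in atTop, dist (μ k 0) (ν 0) < 1 ∧ dist (μ k (-1)) (ν (-1)) < 1 :=
    ((Metric.tendsto_nhds.mp (hpt 0)) 1 one_pos).and
      ((Metric.tendsto_nhds.mp (hpt (-1))) 1 one_pos)
  have E1 : ∀ᶠ k in atTop, ∀ x ∈ Set.Icc (0:ℝ) a, dist (ν x) (μ k x) < η / 4 :=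
    (Metric.tendstoUniformlyOn_iff.mp (hUnif _ isCompact_Icc)) (η / 4) (by positivity)
  have E2 : ∀ᶠ k in atTop, ∀ x ∈ Set.Icc a b, dist (ν x) (μ k x) < (ε / 2) * a :=
    (Metric.tendstoUniformlyOn_iff.mp (hUnif _ isCompact_Icc)) ((ε / 2) * a)
      (by positivity)
  have E3 : ∀ᶠ k in atTop, dist (μ k l₀) (ν l₀) < (ε / 4) * l₀ :=
    (Metric.tendsto_nhds.mp (hpt l₀)) ((ε / 4) * l₀) (by positivity)
  filter_upwards [E0, E1, E2, E3] with k h0 h1 h2 h3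
  set Sk : Set ℝ := {c : ℝ | ∃ l > 0, μ k l = l ^ 2 - c * l} with hSkdef
  have hSkne : Sk.Nonempty := speed_nonempty (μ k)
  have hSkbdd : BddBelow Sk := speed_bddBelow (hconc k) (hμ0 k)
  -- upper bound : sInf Sk < cs + ε/2
  have hupper : sInf Sk < cs + ε / 2 := by
    have hmem : g (μ k) l₀ ∈ Sk := mem_speed_iff.mpr ⟨l₀, hl₀, rfl⟩
    have hle : sInf Sk ≤ g (μ k) l₀ := csInf_le hSkbdd hmem
    have habs := abs_lt.mp (by rw [Real.dist_eq] at h3; exact h3 :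
      |μ k l₀ - ν l₀| < ε / 4 * l₀)
    have hstep : ν l₀ - ε / 4 * l₀ < μ k l₀ := by linarith [habs.1]
    have h5 : (ν l₀ - ε / 4 * l₀) / l₀ < μ k l₀ / l₀ := by gcongr
    have h6 : (ν l₀ - ε / 4 * l₀) / l₀ = ν l₀ / l₀ - ε / 4 := by
      field_simp
    rw [h6] at h5
    have hgl : g (μ k) l₀ < g ν l₀ + ε / 4 := by
      simp only [g]; linarith
    rw [← hc₀] at hgl
    linarith
  -- lower bound : cs - ε/2 ≤ sInf Sk
  have hlower : cs - ε / 2 ≤ sInf Sk := by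
    refine le_csInf hSkne ?_
    intro c hc
    obtain ⟨l, hl, hcg⟩ := mem_speed_iff.mp hc
    rw [hcg]
    by_cases hla : l ≤ a
    · -- small l
      have hνl : ν l < -η / 2 := by
        apply hδ
        rw [Real.dist_eq, sub_zero, abs_of_pos hl]
        linarith
      have hdist := h1 l ⟨le_of_lt hl, hla⟩
      rw [Real.dist_eq] at hdist
      have hμkl : μ k l ≤ -η / 4 := by
        have := abs_lt.mp hdist
        linarith
      have hdiv : η / 4 / l ≤ -(μ k l) / l := by
        gcongr
        linarith
      have hdiv2 : η / 4 / a ≤ η / 4 / l := by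
        gcongr
        all_goals linarith
      have hTa : T ≤ η / 4 / a := by
        rw [le_div_iff₀ hapos]
        nlinarith [haT]
      have : T ≤ g (μ k) l := by
        simp only [g, sub_eq_add_neg, ← neg_div]
        have : (0:ℝ) ≤ l := le_of_lt hl
        linarith
      linarith
    · by_cases hlb : l ≤ b
      · -- middle l
        push_neg at hla
        have hdist := h2 l ⟨le_of_lt hla, hlb⟩
        rw [Real.dist_eq] at hdist
        have habs := abs_lt.mp hdist
        have hstep : μ k l ≤ ν l + ε / 2 * l := by nlinarith [habs.1, hla, hε]
        have h5 : μ k l / l ≤ (ν l + ε / 2 * l) / l := by gcongr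
        have h6 : (ν l + ε / 2 * l) / l = ν l / l + ε / 2 := by
          rw [add_div, mul_div_assoc, div_self (ne_of_gt hl), mul_one]
        rw [h6] at h5
        have hkey : μ k l / l ≤ ν l / l + ε / 2 := h5
        have hgl : g ν l - ε / 2 ≤ g (μ k) l := by
          simp only [g]; linarith
        have := hcs_le l hl
        linarith
      · -- large l
        push_neg at hla hlb
        have hg := g_lower (hconc k) (hμ0 k) hl
        have hμk0 : μ k 0 ≤ ν 0 + 1 := by
          have := abs_lt.mp ((Real.dist_eq _ _) ▸ h0.1)
          linarith
        have hμkm1 : ν (-1) - 1 ≤ μ k (-1) := by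
          have := abs_lt.mp ((Real.dist_eq _ _) ▸ h0.2)
          linarith
        have hCk : μ k 0 - μ k (-1) ≤ Cν + 2 := by
          simp only [hCdef]; linarith
        have h1' : l - (Cν + 2) ≤ g (μ k) l := by linarith
        have h2' : cs ≤ b - (Cν + 2) := by
          have h3' := le_abs_self cs
          have h4' := le_abs_self Cν
          simp only [hbdef]
          linarith
        linarith
  rw [Real.dist_eq, abs_lt]
  constructor <;> linarith
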